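/- Red star reduction: Fix d ≥ 4. Let G be a graph, C ⊆ V(G) with |C| ≤ ⌊d/2⌋ − 1, and L ⊆ V(G) with |L| ≥ 2|C| such that every vertex v ∈ L satisfies N_G(v) = C. Then for any x ∈ L, G has a set of at most k vertices whose removal leaves no d-path if and only if G − x has such a set of at most k vertices. -/

import Mathlib

/-- `G` restricted to vertex set `A` contains a path on `d` vertices as a (not
necessarily induced) subgraph. -/
def HasPathOn {V : Type*} (G : SimpleGraph V) (d : ℕ) (A : Set V) : Prop :=
  ∃ p : Fin d → V, Function.Injective p ∧ (∀ i, p i ∈ A) ∧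
    ∀ (i : ℕ) (h : i + 1 < d), G.Adj (p ⟨i, Nat.lt_of_succ_lt h⟩) (p ⟨i + 1, h⟩)

lemma key_count (d c : ℕ) (hd : 4 ≤ d) (hcd : c + 1 ≤ d / 2)
    (A B : Finset ℕ) (hA : A ⊆ Finset.range d) (hB : B.card ≤ c)
    (hnext : ∀ i ∈ A, i + 1 < d → i + 1 ∈ B)
    (hprev : ∀ i ∈ A, 0 < i → i - 1 ∈ B) :
    A.card ≤ c := by
  classical
  open Finset in
  by_contra hm
  push_neg at hm
  set A1 := A.filter (fun i => i + 1 < d) with hA1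
  set A2 := A.filter (fun i => 0 < i) with hA2
  set B1 := A1.image (fun i => i + 1) with hB1
  set B2 := A2.image (fun i => i - 1) with hB2
  have hB1card : B1.card = A1.card := by
    apply card_image_of_injOn; intro a _ b _ h; simp only at h; omega
  have hB2card : B2.card = A2.card := by
    apply card_image_of_injOn
    intro a ha b hb h
    simp only [hA2, coe_filter, Set.mem_setOf_eq] at ha hb
    simp only at h
    omega
  have hB1sub : B1 ⊆ B := by
    intro j hj
    simp only [hB1, mem_image, hA1, mem_filter] at hj
    obtain ⟨i, ⟨hiA, hilt⟩, rfl⟩ := hj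
    exact hnext i hiA hilt
  have hB2sub : B2 ⊆ B := by
    intro j hj
    simp only [hB2, mem_image, hA2, mem_filter] at hj
    obtain ⟨i, ⟨hiA, hilt⟩, rfl⟩ := hj
    exact hprev i hiA hilt
  have hA1card : A.card ≤ A1.card + 1 := by
    have : A ⊆ insert (d - 1) A1 := by
      intro i hi
      have := hA hi
      simp only [mem_range] at this
      by_cases h : i + 1 < d
      · exact mem_insert_of_mem (mem_filter.2 ⟨hi, h⟩)
      · have : i = d - 1 := by omega
        exact this ▸ mem_insert_self _ _
    calc A.card ≤ (insert (d-1) A1).card := card_le_card this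
      _ ≤ A1.card + 1 := card_insert_le _ _
  have hA2card : A.card ≤ A2.card + 1 := by
    have : A ⊆ insert 0 A2 := by
      intro i hi
      by_cases h : 0 < i
      · exact mem_insert_of_mem (mem_filter.2 ⟨hi, h⟩)
      · have : i = 0 := by omega
        exact this ▸ mem_insert_self _ _
    calc A.card ≤ (insert 0 A2).card := card_le_card this
      _ ≤ A2.card + 1 := card_insert_le _ _
  have hBeq1 : B1 = B := eq_of_subset_of_card_le hB1sub (by omega)
  have hBeq2 : B2 = B := eq_of_subset_of_card_le hB2sub (by omega)
  have hlast : d - 1 ∈ A := by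
    by_contra hcon
    have : A ⊆ A1 := by
      intro i hi
      have := hA hi
      simp only [mem_range] at this
      refine mem_filter.2 ⟨hi, ?_⟩
      rcases Nat.lt_or_ge (i+1) d with h | h
      · exact h
      · exact absurd (show i = d - 1 by omega) (fun e => hcon (e ▸ hi))
    have h1 : A1.card = A.card := le_antisymm (card_le_card (filter_subset _ _)) (card_le_card this)
    have := card_le_card hB1sub
    omega
  have h0 : 0 ∈ A := by
    by_contra hcon
    have : A ⊆ A2 := by
      intro i hi
      refine mem_filter.2 ⟨hi, ?_⟩
      rcases Nat.eq_zero_or_pos i with h | h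
      · exact absurd (h ▸ hi) hcon
      · exact h
    have h1 : A2.card = A.card := le_antisymm (card_le_card (filter_subset _ _)) (card_le_card this)
    have := card_le_card hB2sub
    omega
  have heven : ∀ t, 2 * t < d → 2 * t ∈ A := by
    intro t
    induction t with
    | zero => intro _; simpa using h0
    | succ t ih =>
      intro hlt
      have h2t : 2 * t ∈ A := ih (by omega)
      have hmem1 : 2 * t + 1 ∈ B1 :=
        mem_image.2 ⟨2 * t, mem_filter.2 ⟨h2t, by omega⟩, rfl⟩
      rw [hBeq1, ← hBeq2] at hmem1
      simp only [hB2, mem_image, hA2, mem_filter] at hmem1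
      obtain ⟨i, ⟨hiA, hipos⟩, hieq⟩ := hmem1
      have : i = 2 * (t + 1) := by omega
      exact this ▸ hiA
  have hinj : Finset.card (Finset.range (d / 2 + 1)) ≤ A.card := by
    apply card_le_card_of_injOn (fun j => min (2 * j) (d - 1))
    · intro j hj
      simp only [mem_coe, mem_range] at hj
      show min (2 * j) (d - 1) ∈ A
      by_cases h : 2 * j < d
      · rw [show min (2 * j) (d - 1) = 2 * j by omega]; exact heven j h
      · rw [show min (2 * j) (d - 1) = d - 1 by omega]; exact hlast
    · intro a ha b hb hab
      simp only [coe_range, Set.mem_Iio] at ha hb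
      simp only at hab
      omega
  simp only [card_range] at hinj
  have hfin : B.card = A1.card := hBeq1 ▸ hB1card
  omega

lemma hasPathOn_mono {V : Type*} {G : SimpleGraph V} {d : ℕ} {A B : Set V}
    (h : A ⊆ B) : HasPathOn G d A → HasPathOn G d B := by
  rintro ⟨p, h1, h2, h3⟩
  exact ⟨p, h1, fun i => h (h2 i), h3⟩

theorem stmt9 {V : Type} [Fintype V] (d k : ℕ) (hd : 4 ≤ d)
    (G : SimpleGraph V) (C L : Set V)
    (hC : C.ncard ≤ d / 2 - 1) (hL : 2 * C.ncard ≤ L.ncard)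
    (hN : ∀ v ∈ L, G.neighborSet v = C)
    (x : V) (hx : x ∈ L) :
    (∃ S : Set V, ¬ HasPathOn G d Sᶜ ∧ S.ncard ≤ k) ↔
      (∃ S' : Set V, x ∉ S' ∧ ¬ HasPathOn G d ({x} ∪ S')ᶜ ∧ S'.ncard ≤ k) := by
  classical
  constructor
  · rintro ⟨S, hS, hk⟩
    refine ⟨S \ {x}, by simp, ?_,
      le_trans (Set.ncard_le_ncard Set.diff_subset (Set.toFinite S)) hk⟩
    intro hp
    apply hS
    apply hasPathOn_mono ?_ hp
    intro v hv
    simp only [Set.mem_compl_iff, Set.mem_union, Set.mem_singleton_iff, Set.mem_diff] at hv ⊢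
    tauto
  · rintro ⟨S', hxS', hS', hk⟩
    by_cases hcase : C.ncard ≤ (S' ∩ L).ncard
    · -- replace the L-vertices of S' by C
      refine ⟨(S' \ L) ∪ C, ?_, ?_⟩
      · rintro ⟨p, hinj, hmem, hadj⟩
        have hnoL : ∀ i : Fin d, p i ∉ L := by
          intro i hiL
          have hni : ∀ w, G.Adj (p i) w → w ∈ C := by
            intro w hw; rw [← hN _ hiL]; exact hw
          by_cases h : (i : ℕ) + 1 < d
          · have hadj1 := hadj i h
            rw [Fin.eta] at hadj1
            have hC1 : p ⟨(i : ℕ) + 1, h⟩ ∈ C := hni _ hadj1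
            have hm2 := hmem ⟨(i : ℕ) + 1, h⟩
            simp only [Set.mem_compl_iff, Set.mem_union] at hm2
            exact hm2 (Or.inr hC1)
          · have hival : (i : ℕ) = d - 1 := by have := i.isLt; omega
            have h2 : (d - 2) + 1 < d := by omega
            have hadj1 := hadj (d - 2) h2
            have hieq : (⟨d - 2 + 1, h2⟩ : Fin d) = i := by
              apply Fin.ext; simp only; omega
            rw [hieq] at hadj1
            have hC1 : p ⟨d - 2, Nat.lt_of_succ_lt h2⟩ ∈ C := hni _ hadj1.symm
            have hm2 := hmem ⟨d - 2, Nat.lt_of_succ_lt h2⟩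
            simp only [Set.mem_compl_iff, Set.mem_union] at hm2
            exact hm2 (Or.inr hC1)
        apply hS'
        refine ⟨p, hinj, ?_, hadj⟩
        intro i
        have hm := hmem i
        have hLi := hnoL i
        simp only [Set.mem_compl_iff, Set.mem_union, Set.mem_diff] at hm
        push_neg at hm
        simp only [Set.mem_compl_iff, Set.mem_union, Set.mem_singleton_iff]
        push_neg
        refine ⟨fun he => hLi (he ▸ hx), fun hiS' => hLi (hm.1 hiS')⟩
      · have h1 : ((S' \ L) ∪ C).ncard ≤ (S' \ L).ncard + C.ncard := Set.ncard_union_le _ _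
        have h2 : (S' ∩ L).ncard + (S' \ L).ncard = S'.ncard :=
          Set.ncard_inter_add_ncard_diff_eq_ncard S' L
        omega
    · push_neg at hcase
      refine ⟨S', ?_, hk⟩
      rintro ⟨p, hinj, hmem, hadj⟩
      by_cases hxp : ∃ j : Fin d, p j = x
      · obtain ⟨j, hj⟩ := hxp
        -- counting: find a replacement vertex y
        set AN : Finset ℕ := (Finset.range d).filter (fun i => ∃ hi : i < d, p ⟨i, hi⟩ ∈ L)
          with hAN
        set BN : Finset ℕ := (Finset.range d).filter (fun i => ∃ hi : i < d, p ⟨i, hi⟩ ∈ C)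
          with hBN
        have hBcard : BN.card ≤ C.ncard := by
          rw [Set.ncard_eq_toFinset_card' C]
          apply Finset.card_le_card_of_injOn (fun i => if hi : i < d then p ⟨i, hi⟩ else x)
          · intro i hi
            simp only [hBN, Finset.mem_coe, Finset.mem_filter, Finset.mem_range] at hi
            obtain ⟨h1, h2, h3⟩ := hi
            show (if hi : i < d then p ⟨i, hi⟩ else x) ∈ _
            rw [dif_pos h1]
            exact Set.mem_toFinset.2 h3
          · intro a ha b hb hab
            simp only [hBN, Finset.coe_filter, Set.mem_setOf_eq, Finset.mem_range] at ha hb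
            obtain ⟨ha1, -⟩ := ha
            obtain ⟨hb1, -⟩ := hb
            simp only [dif_pos ha1, dif_pos hb1] at hab
            have := hinj hab
            simpa [Fin.mk.injEq] using congrArg Fin.val this
        have hnext : ∀ i ∈ AN, i + 1 < d → i + 1 ∈ BN := by
          intro i hi hlt
          simp only [hAN, Finset.mem_filter, Finset.mem_range] at hi
          obtain ⟨h1, h2, h3⟩ := hi
          have hadj1 := hadj i hlt
          have hC1 : p ⟨i + 1, hlt⟩ ∈ C := by
            rw [← hN _ h3]
            exact hadj1
          simp only [hBN, Finset.mem_filter, Finset.mem_range]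
          exact ⟨hlt, hlt, hC1⟩
        have hprev : ∀ i ∈ AN, 0 < i → i - 1 ∈ BN := by
          intro i hi hpos
          obtain ⟨i', rfl⟩ : ∃ i', i = i' + 1 := ⟨i - 1, by omega⟩
          simp only [hAN, Finset.mem_filter, Finset.mem_range] at hi
          obtain ⟨h1, h2, h3⟩ := hi
          have hadj1 := hadj i' h1
          have hC1 : p ⟨i', Nat.lt_of_succ_lt h1⟩ ∈ C := by
            rw [← hN _ h3]
            exact hadj1.symm
          simp only [hBN, Finset.mem_filter, Finset.mem_range, Nat.add_sub_cancel]
          exact ⟨by omega, by omega, hC1⟩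
        have hAcard : AN.card ≤ C.ncard :=
          key_count d C.ncard hd (by omega) AN BN (Finset.filter_subset _ _) hBcard hnext hprev
        have hLp : (L ∩ Set.range p).ncard ≤ C.ncard := by
          have hsub : L ∩ Set.range p ⊆
              ↑(AN.image (fun i => if hi : i < d then p ⟨i, hi⟩ else x)) := by
            rintro v ⟨hvL, i, rfl⟩
            simp only [Finset.coe_image, Set.mem_image, Finset.mem_coe]
            refine ⟨(i : ℕ), ?_, ?_⟩
            · simp only [hAN, Finset.mem_filter, Finset.mem_range]
              exact ⟨i.isLt, i.isLt, by rw [Fin.eta]; exact hvL⟩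
            · rw [dif_pos i.isLt, Fin.eta]
          calc (L ∩ Set.range p).ncard
              ≤ (↑(AN.image (fun i => if hi : i < d then p ⟨i, hi⟩ else x)) : Set V).ncard :=
                Set.ncard_le_ncard hsub (Set.toFinite _)
            _ = (AN.image (fun i => if hi : i < d then p ⟨i, hi⟩ else x)).card :=
                Set.ncard_coe_finset _
            _ ≤ AN.card := Finset.card_image_le
            _ ≤ C.ncard := hAcard
        have hy : (L \ (S' ∪ Set.range p)).Nonempty := by
          rw [Set.nonempty_iff_ne_empty]
          intro hemp
          have hsub : L ⊆ (L ∩ S') ∪ (L ∩ Set.range p) := by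
            intro v hv
            have hvn : v ∉ L \ (S' ∪ Set.range p) := by rw [hemp]; exact fun h => h
            simp only [Set.mem_diff, Set.mem_union] at hvn
            simp only [Set.mem_union, Set.mem_inter_iff]
            tauto
          have hle := Set.ncard_le_ncard hsub (Set.toFinite _)
          have h3 := Set.ncard_union_le (L ∩ S') (L ∩ Set.range p)
          have h4 : (L ∩ S').ncard = (S' ∩ L).ncard := by rw [Set.inter_comm]
          omega
        obtain ⟨y, hyd⟩ := hy
        simp only [Set.mem_diff, Set.mem_union] at hyd
        obtain ⟨hyL, hyn⟩ := hyd
        push_neg at hyn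
        obtain ⟨hyS', hyrp⟩ := hyn
        have hyx : y ≠ x := fun h => hyrp ⟨j, h ▸ hj⟩
        have hNx : G.neighborSet x = C := hN x hx
        have hNy : G.neighborSet y = C := hN y hyL
        set p' := Function.update p j y with hp'
        apply hS'
        refine ⟨p', ?_, ?_, ?_⟩
        · intro a b hab
          by_cases ha : a = j <;> by_cases hb : b = j
          · rw [ha, hb]
          · rw [hp'] at hab
            rw [ha, Function.update_self, Function.update_of_ne hb] at hab
            exact absurd ⟨b, hab.symm⟩ hyrp
          · rw [hp'] at hab
            rw [hb, Function.update_self, Function.update_of_ne ha] at hab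
            exact absurd ⟨a, hab⟩ hyrp
          · rw [hp'] at hab
            rw [Function.update_of_ne ha, Function.update_of_ne hb] at hab
            exact hinj hab
        · intro i
          simp only [Set.mem_compl_iff, Set.mem_union, Set.mem_singleton_iff]
          push_neg
          by_cases hi : i = j
          · rw [hi, hp', Function.update_self]
            exact ⟨hyx, hyS'⟩
          · rw [hp', Function.update_of_ne hi]
            exact ⟨fun he => hi (hinj (he.trans hj.symm)), hmem i⟩
        · intro i hlt
          have hadj1 := hadj i hlt
          by_cases ha : (⟨i, Nat.lt_of_succ_lt hlt⟩ : Fin d) = j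
          · have hbj : (⟨i + 1, hlt⟩ : Fin d) ≠ j := by
              intro h
              have := ha.trans h.symm
              simp only [Fin.mk.injEq] at this
              omega
            show G.Adj (p' ⟨i, Nat.lt_of_succ_lt hlt⟩) (p' ⟨i + 1, hlt⟩)
            rw [hp', ha, Function.update_self, Function.update_of_ne hbj]
            have h1 : G.Adj x (p ⟨i + 1, hlt⟩) := by
              rw [← hj, ← ha]; exact hadj1
            have h2 : p ⟨i + 1, hlt⟩ ∈ C := by rw [← hNx]; exact h1
            have h3 : p ⟨i + 1, hlt⟩ ∈ G.neighborSet y := by rw [hNy]; exact h2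
            exact h3
          · by_cases hb : (⟨i + 1, hlt⟩ : Fin d) = j
            · show G.Adj (p' ⟨i, Nat.lt_of_succ_lt hlt⟩) (p' ⟨i + 1, hlt⟩)
              rw [hp', hb, Function.update_self, Function.update_of_ne ha]
              have h1 : G.Adj (p ⟨i, Nat.lt_of_succ_lt hlt⟩) x := by
                rw [← hj, ← hb]; exact hadj1
              have h2 : p ⟨i, Nat.lt_of_succ_lt hlt⟩ ∈ C := by rw [← hNx]; exact h1.symm
              have h3 : p ⟨i, Nat.lt_of_succ_lt hlt⟩ ∈ G.neighborSet y := by rw [hNy]; exact h2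
              exact h3.symm
            · show G.Adj (p' ⟨i, Nat.lt_of_succ_lt hlt⟩) (p' ⟨i + 1, hlt⟩)
              rw [hp', Function.update_of_ne ha, Function.update_of_ne hb]
              exact hadj1
      · apply hS'
        push_neg at hxp
        refine ⟨p, hinj, fun i => ?_, hadj⟩
        simp only [Set.mem_compl_iff, Set.mem_union, Set.mem_singleton_iff]
        push_neg
        exact ⟨hxp i, hmem i⟩
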